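/- Let s_k = sin(kπ/9) for k = 1,2,3,4, let λ = s₄/s₁, λ₂ = −s₁/s₂, λ₃ = s₂/s₄, and let W' = [1−2λ², λ−2λ²] ∪ [λ−λ², 0] ⊂ ℝ. Define U := { (a + bλ₂ + cλ₂², a + bλ₃ + cλ₃²) ∈ ℝ² : a, b, c ∈ ℤ, a + bλ + cλ² ∈ W' }. Then U is a Delone set: there exists r > 0 such that every open ball of radius r in ℝ² contains at most one point of U, and there exists R > 0 such that every closed ball of radius R in ℝ² contains at least one point of U. -/

import Mathlib

open Real

private lemma ratA (q : ℚ) : q^3 - 3*q^2 + 1 ≠ 0 := by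
  intro h
  have hq : ((q.num : ℚ)) = q * q.den := by
    rw [mul_comm]; exact_mod_cast (Rat.den_mul_eq_num q).symm
  have hint : q.num^3 - 3*q.num^2*(q.den:ℤ) + (q.den:ℤ)^3 = 0 := by
    have : ((q.num^3 - 3*q.num^2*(q.den:ℤ) + (q.den:ℤ)^3 : ℤ) : ℚ) = (q^3-3*q^2+1) * (q.den:ℚ)^3 := by
      push_cast [hq]; ring
    rw [h, zero_mul] at this
    exact_mod_cast this
  have hdvd : (q.den : ℤ) ∣ q.num^3 := ⟨3*q.num^2 - (q.den:ℤ)^2, by linarith⟩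
  have hdvd' : q.den ∣ q.num.natAbs^3 := by
    have := Int.natAbs_dvd_natAbs.mpr hdvd
    simpa [Int.natAbs_pow] using this
  have hcop : Nat.Coprime q.den (q.num.natAbs^3) := (q.reduced.symm).pow_right 3
  have hden1 : q.den = 1 := Nat.Coprime.eq_one_of_dvd hcop hdvd'
  rw [hden1] at hint
  have h2 : q.num^2 * (q.num - 3) = -1 := by push_cast at hint; linarith
  have h3 : q.num^2 ∣ 1 := ⟨3 - q.num, by linarith⟩
  have h4 : q.num^2 = 1 := Int.eq_one_of_dvd_one (sq_nonneg q.num) h3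
  have h5 : (q.num-1)*(q.num+1) = 0 := by linarith
  rcases mul_eq_zero.mp h5 with h6 | h6
  · have h7 : q.num = 1 := by linarith
    rw [h7] at h2; norm_num at h2
  · have h7 : q.num = -1 := by linarith
    rw [h7] at h2; norm_num at h2

private lemma lemB (μ : ℝ) (hμ : μ^3 - 3*μ^2 + 1 = 0) (a b c : ℤ)
    (h : (a:ℝ) + (b:ℝ)*μ + (c:ℝ)*μ^2 = 0) : a = 0 ∧ b = 0 ∧ c = 0 := by
  have key : ∀ q : ℚ, (q : ℝ) = μ → False := by
    intro q hqμ
    apply ratA q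
    have : ((q^3 - 3*q^2 + 1 : ℚ) : ℝ) = 0 := by push_cast [hqμ]; linarith [hμ]
    exact_mod_cast this
  by_cases hc : c = 0
  · subst hc
    by_cases hb : b = 0
    · subst hb
      refine ⟨by exact_mod_cast (by simpa using h), rfl, rfl⟩
    · exfalso
      apply key (-(a:ℚ)/(b:ℚ))
      have hbR : (b:ℝ) ≠ 0 := Int.cast_ne_zero.mpr hb
      push_cast
      push_cast at h
      field_simp
      linear_combination -h
  · exfalso
    have keyeq : ((b:ℝ)^2 - (a:ℝ)*(c:ℝ) + 3*(b:ℝ)*(c:ℝ))*μ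
        + ((a:ℝ)*(b:ℝ) + 3*(a:ℝ)*(c:ℝ) + (c:ℝ)^2) = 0 := by
      linear_combination (c:ℝ)^2 * hμ - ((c:ℝ)*μ - (b:ℝ) - 3*(c:ℝ)) * h
    by_cases hDz : b^2 - a*c + 3*b*c = 0
    · have hDzR : ((b:ℝ)^2 - (a:ℝ)*(c:ℝ) + 3*(b:ℝ)*(c:ℝ)) = 0 := by exact_mod_cast hDz
      have hEz : a*b + 3*a*c + c^2 = 0 := by
        have : ((a*b + 3*a*c + c^2 : ℤ) : ℝ) = 0 := by push_cast; rw [hDzR] at keyeq; linarith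
        exact_mod_cast this
      have hP : (3*c+b)^3 - 3*(3*c+b)^2*c + c^3 = 0 := by
        linear_combination (b + 3*c) * hDz + c * hEz
      have hcQ : ((c:ℚ)) ≠ 0 := Int.cast_ne_zero.mpr hc
      have : ((3*(c:ℚ)+(b:ℚ))/(c:ℚ))^3 - 3*((3*(c:ℚ)+(b:ℚ))/(c:ℚ))^2 + 1 = 0 := by
        have hPQ : (3*(c:ℚ)+b)^3 - 3*(3*(c:ℚ)+b)^2*c + (c:ℚ)^3 = 0 := by exact_mod_cast hP
        have hinv : (c:ℚ) * (c:ℚ)⁻¹ = 1 := mul_inv_cancel₀ hcQ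
        linear_combination ((c:ℚ)⁻¹)^3 * hPQ + (3*(3*(c:ℚ)+b)^2*((c:ℚ)⁻¹)^2 - (c:ℚ)^2*((c:ℚ)⁻¹)^2 - (c:ℚ)*(c:ℚ)⁻¹ - 1) * hinv
      exact ratA _ this
    · apply key (-((a*b + 3*a*c + c^2 : ℤ):ℚ)/((b^2 - a*c + 3*b*c : ℤ):ℚ))
      have hDR : ((b^2 - a*c + 3*b*c : ℤ):ℝ) ≠ 0 := Int.cast_ne_zero.mpr hDz
      push_cast
      push_cast at hDR
      have hinv := mul_inv_cancel₀ hDR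
      linear_combination (-((b:ℝ)^2 - (a:ℝ)*(c:ℝ) + 3*(b:ℝ)*(c:ℝ))⁻¹) * keyeq + μ * hinv

private lemma prodN (t A B C : ℝ) (ht : 8*t^3 - 6*t - 1 = 0) :
    (A + B*(1+2*t) + C*(1+2*t)^2) * (A + B*(3-4*t^2) + C*(3-4*t^2)^2) *
    (A + B*(16*t^2-16*t^4-1) + C*(16*t^2-16*t^4-1)^2)
    = A^3 + 3*A^2*B + 9*A^2*C + 3*A*B*C + 6*A*C^2 - B^3 - 3*B^2*C + C^3 := by
  linear_combination (2048*t^11*C^3 + 1024*t^10*B*C^2 + 2048*t^10*C^3 + 512*t^9*A*C^2 - 5120*t^9*C^3 - 256*t^8*B^2*C - 3328*t^8*B*C^2 - 5376*t^8*C^3 - 128*t^7*A*B*C - 1280*t^7*A*C^2 - 128*t^7*B^2*C - 512*t^7*B*C^2 + 4224*t^7*C^3 + 64*t^6*A*B*C + 192*t^6*A*C^2 + 448*t^6*B^2*C + 3584*t^6*B*C^2 + 4928*t^6*C^3 + 32*t^5*A^2*C + 256*t^5*A*B*C + 1216*t^5*A*C^2 + 224*t^5*B^2*C + 896*t^5*B*C^2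 - 1120*t^5*C^3 - 96*t^4*A*B*C - 272*t^4*A*C^2 + 16*t^4*B^3 - 160*t^4*B^2*C - 1408*t^4*B*C^2 - 1792*t^4*C^3 - 40*t^3*A^2*C + 8*t^3*A*B^2 - 128*t^3*A*B*C - 480*t^3*A*C^2 + 8*t^3*B^3 - 80*t^3*B^2*C - 416*t^3*B*C^2 - 40*t^3*C^3 + 4*t^2*A^2*C - 4*t^2*A*B^2 + 28*t^2*A*B*C + 100*t^2*A*C^2 - 16*t^2*B^3 - 36*t^2*B^2*C + 124*t^2*B*C^2 + 204*t^2*C^3 - 2*t*A^2*B + 8*t*A^2*C - 10*t*A*B^2 - 10*t*A*B*C + 38*t*A*C^2 - 6*t*B^3 - 12*t*B^2*C + 24*t*B*C^2 + 12*t*C^3 - 2*A^2*C + A*B^2 - 3*A*B*C - 13*A*C^2 + 2*B^3 + 6*B^2*C - 3*B*C^2 - 8*C^3) * ht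

private lemma coord_le_dist (p q : EuclideanSpace ℝ (Fin 2)) (i : Fin 2) :
    |p i - q i| ≤ dist p q := by
  rw [EuclideanSpace.dist_eq, ← Real.sqrt_sq_eq_abs]
  apply Real.sqrt_le_sqrt
  calc (p i - q i)^2 = dist (p i) (q i)^2 := by rw [Real.dist_eq, sq_abs]
  _ ≤ ∑ j, dist (p j) (q j)^2 :=
      Finset.single_le_sum (f := fun j => dist (p j) (q j)^2)
        (fun j _ => sq_nonneg _) (Finset.mem_univ i)

set_option maxHeartbeats 1000000 in
/-- The cut-and-project set `U` of the dual substitution point set `V'` is a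
Delone set in the Euclidean plane: with `s_k = sin(kπ/9)`, `λ = s₄/s₁`,
`λ₂ = −s₁/s₂`, `λ₃ = s₂/s₄`, window `W' = [1−2λ², λ−2λ²] ∪ [λ−λ², 0]` and
`U = {(a+bλ₂+cλ₂², a+bλ₃+cλ₃²) : a,b,c ∈ ℤ, a+bλ+cλ² ∈ W'}`, there is `r > 0`
such that every open ball of radius `r` contains at most one point of `U`, and
there is `R > 0` such that every closed ball of radius `R` contains at least one
point of `U`. -/
theorem dual_model_set_is_delone (s : ℕ → ℝ)
    (hs : ∀ k, s k = Real.sin ((k : ℝ) * π / 9))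
    (lam lam2 lam3 : ℝ)
    (h1 : lam = s 4 / s 1) (h2 : lam2 = -(s 1 / s 2)) (h3 : lam3 = s 2 / s 4)
    (W' : Set ℝ)
    (hW : W' = Set.Icc (1 - 2 * lam ^ 2) (lam - 2 * lam ^ 2) ∪
          Set.Icc (lam - lam ^ 2) 0)
    (U : Set (EuclideanSpace ℝ (Fin 2)))
    (hU : U = {p | ∃ a b c : ℤ,
        p 0 = (a : ℝ) + (b : ℝ) * lam2 + (c : ℝ) * lam2 ^ 2 ∧
        p 1 = (a : ℝ) + (b : ℝ) * lam3 + (c : ℝ) * lam3 ^ 2 ∧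
        ((a : ℝ) + (b : ℝ) * lam + (c : ℝ) * lam ^ 2) ∈ W'}) :
    (∃ r > (0 : ℝ), ∀ x : EuclideanSpace ℝ (Fin 2),
        (U ∩ Metric.ball x r).Subsingleton) ∧
    (∃ R > (0 : ℝ), ∀ x : EuclideanSpace ℝ (Fin 2),
        (U ∩ Metric.closedBall x R).Nonempty) := by
  have hπ := Real.pi_pos
  -- the algebraic generator t = cos (π/9)
  have h3m : Real.cos (3*(π/9)) = 4 * Real.cos (π/9)^3 - 3 * Real.cos (π/9) :=
    Real.cos_three_mul (π/9)
  rw [show (3:ℝ)*(π/9) = π/3 by ring, Real.cos_pi_div_three] at h3m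
  have hpos : 0 < Real.cos (π/9) :=
    Real.cos_pos_of_mem_Ioo ⟨by linarith, by linarith⟩
  have hle1 : Real.cos (π/9) ≤ 1 := Real.cos_le_one _
  set t : ℝ := Real.cos (π/9) with htdef
  have ht : 8*t^3 - 6*t - 1 = 0 := by linarith
  have ht1 : 0.93 < t := by
    nlinarith [sq_nonneg (t - 0.94), sq_nonneg (t + 0.4), mul_pos hpos hpos]
  have ht2 : t < 0.95 := by
    nlinarith [sq_nonneg (t - 0.94), sq_nonneg (t + 0.4), mul_pos hpos hpos]
  -- sine values
  have hsin_pos : 0 < Real.sin (π/9) :=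
    Real.sin_pos_of_pos_of_lt_pi (by linarith) (by linarith)
  have hs1 : s 1 = Real.sin (π/9) := by rw [hs]; norm_num
  have hs2 : s 2 = Real.sin (π/9) * (2*t) := by
    rw [hs, show ((2:ℕ):ℝ) * π / 9 = 2*(π/9) by push_cast; ring, Real.sin_two_mul,
      ← htdef]
    ring
  have hs4 : s 4 = Real.sin (π/9) * (8*t^3 - 4*t) := by
    rw [hs, show ((4:ℕ):ℝ) * π / 9 = 2*(2*(π/9)) by push_cast; ring, Real.sin_two_mul,
      Real.sin_two_mul, Real.cos_two_mul, ← htdef]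
    ring
  have hsne : Real.sin (π/9) ≠ 0 := ne_of_gt hsin_pos
  have htne : t ≠ 0 := by positivity
  have ht84 : 8*t^3 - 4*t ≠ 0 := by nlinarith
  -- closed forms of the three roots
  have hlam : lam = 1 + 2*t := by
    rw [h1, hs4, hs1, mul_comm, mul_div_assoc, div_self hsne, mul_one]
    linarith
  have hlam2 : lam2 = 3 - 4*t^2 := by
    rw [h2, hs2, hs1]
    field_simp
    linear_combination ht
  have hlam3 : lam3 = 16*t^2 - 16*t^4 - 1 := by
    rw [h3, hs2, hs4]
    rw [div_eq_iff (by exact mul_ne_zero hsne ht84)]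
    linear_combination (Real.sin (π/9)) * (16*t^4 - 12*t^2 + 2*t) * ht
  -- numeric bounds
  have hl1 : 2.86 < lam := by rw [hlam]; linarith
  have hl2 : lam < 2.9 := by rw [hlam]; linarith
  have hm1 : -0.61 < lam2 := by rw [hlam2]; nlinarith
  have hm2 : lam2 < -0.45 := by rw [hlam2]; nlinarith
  have hn1 : 0.40 < lam3 := by rw [hlam3]; nlinarith
  have hn2 : lam3 < 0.87 := by rw [hlam3]; nlinarith
  -- cubic equations
  have hsq2hi : lam2^2 ≤ 0.3721 := by nlinarith
  have hsq3hi : lam3^2 ≤ 0.7569 := by nlinarith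
  have hsqlam_lo : 8.17 ≤ lam^2 := by nlinarith
  have hsqlam_hi : lam^2 ≤ 8.41 := by nlinarith
  have hK1 : lam - lam^2 + 1 ≤ 0 := by nlinarith
  have sq7 : ∀ y : ℝ, 0 ≤ y → y ≤ 7 → y^2 ≤ 49 := by
    intro y hy1 hy2; nlinarith
  have hc1 : lam^3 - 3*lam^2 + 1 = 0 := by rw [hlam]; linear_combination ht
  have hc2 : lam2^3 - 3*lam2^2 + 1 = 0 := by
    rw [hlam2]; linear_combination (-8*t^3 + 6*t - 1) * ht
  have hc3 : lam3^3 - 3*lam3^2 + 1 = 0 := by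
    rw [hlam3]
    linear_combination (-512*t^9 + 1152*t^7 - 64*t^6 - 864*t^5 + 96*t^4 + 240*t^3 - 36*t^2 - 18*t + 3) * ht
  -- window is contained in [1-2λ², 0]
  have hwin : ∀ w ∈ W', 1 - 2*lam^2 ≤ w ∧ w ≤ 0 := by
    rw [hW]
    rintro w (⟨hw1, hw2⟩ | ⟨hw1, hw2⟩)
    · exact ⟨hw1, by linarith⟩
    · exact ⟨by linarith, hw2⟩
  constructor
  · -- uniform discreteness
    refine ⟨1/8, by norm_num, fun x => ?_⟩
    intro p hp q hq
    rw [hU] at hp hq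
    obtain ⟨⟨pa, pb, pc, hp0, hp1, hpw⟩, hpb⟩ := hp
    obtain ⟨⟨qa, qb, qc, hq0, hq1, hqw⟩, hqb⟩ := hq
    have hdistpq : dist p q < 1/4 := by
      have h1' := Metric.mem_ball.mp hpb
      have h2' := Metric.mem_ball.mp hqb
      calc dist p q ≤ dist p x + dist q x := dist_triangle_right p q x
      _ < 1/4 := by linarith
    have hu2 : |((pa - qa : ℤ):ℝ) + ((pb - qb : ℤ):ℝ)*lam2 + ((pc - qc : ℤ):ℝ)*lam2^2| < 1/4 := by
      have : ((pa - qa : ℤ):ℝ) + ((pb - qb : ℤ):ℝ)*lam2 + ((pc - qc : ℤ):ℝ)*lam2^2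
          = p 0 - q 0 := by rw [hp0, hq0]; push_cast; ring
      rw [this]
      exact lt_of_le_of_lt (coord_le_dist p q 0) hdistpq
    have hu3 : |((pa - qa : ℤ):ℝ) + ((pb - qb : ℤ):ℝ)*lam3 + ((pc - qc : ℤ):ℝ)*lam3^2| < 1/4 := by
      have : ((pa - qa : ℤ):ℝ) + ((pb - qb : ℤ):ℝ)*lam3 + ((pc - qc : ℤ):ℝ)*lam3^2
          = p 1 - q 1 := by rw [hp1, hq1]; push_cast; ring
      rw [this]
      exact lt_of_le_of_lt (coord_le_dist p q 1) hdistpq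
    have hu1 : |((pa - qa : ℤ):ℝ) + ((pb - qb : ℤ):ℝ)*lam + ((pc - qc : ℤ):ℝ)*lam^2| < 16 := by
      obtain ⟨hA, hB⟩ := hwin _ hpw
      obtain ⟨hC, hD⟩ := hwin _ hqw
      have : ((pa - qa : ℤ):ℝ) + ((pb - qb : ℤ):ℝ)*lam + ((pc - qc : ℤ):ℝ)*lam^2
          = ((pa:ℝ) + (pb:ℝ)*lam + (pc:ℝ)*lam^2) - ((qa:ℝ) + (qb:ℝ)*lam + (qc:ℝ)*lam^2) := by
        push_cast; ring
      rw [this, abs_lt]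
      constructor <;> linarith
    set da := pa - qa with hda
    set db := pb - qb with hdb
    set dc := pc - qc with hdc
    set N : ℤ := da^3 + 3*da^2*db + 9*da^2*dc + 3*da*db*dc + 6*da*dc^2 - db^3 - 3*db^2*dc + dc^3 with hN
    have hNval : ((da:ℝ) + (db:ℝ)*lam + (dc:ℝ)*lam^2) * ((da:ℝ) + (db:ℝ)*lam2 + (dc:ℝ)*lam2^2)
        * ((da:ℝ) + (db:ℝ)*lam3 + (dc:ℝ)*lam3^2) = (N:ℝ) := by
      rw [hN, hlam, hlam2, hlam3]
      push_cast
      exact prodN t _ _ _ ht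
    have main : ∀ u1 u2 u3 : ℝ, |u1| < 16 → |u2| < 1/4 → |u3| < 1/4 →
        u1*u2*u3 = (N:ℝ) → N = 0 := by
      intro u1 u2 u3 k1 k2 k3 keq
      have a1 := abs_nonneg u1
      have a2 := abs_nonneg u2
      have a3 := abs_nonneg u3
      have habs : |(N:ℝ)| < 1 := by
        rw [← keq, abs_mul, abs_mul]
        have s1 : |u2| * |u3| < (1/4)*(1/4) := mul_lt_mul'' k2 k3 a2 a3
        have s0 : (0:ℝ) ≤ |u2| * |u3| := mul_nonneg a2 a3
        calc |u1| * |u2| * |u3| = |u1| * (|u2| * |u3|) := by ring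
        _ ≤ 16 * (|u2| * |u3|) := mul_le_mul_of_nonneg_right k1.le s0
        _ < 1 := by linarith
      rcases eq_or_ne N 0 with h | h
      · exact h
      · exfalso
        have g1 : (1:ℤ) ≤ |N| := Int.one_le_abs h
        have g2 : (1:ℝ) ≤ |(N:ℝ)| := by
          rw [← Int.cast_abs]; exact_mod_cast g1
        linarith
    have hN0 : N = 0 := main _ _ _ hu1 hu2 hu3 hNval
    have hzero : da = 0 ∧ db = 0 ∧ dc = 0 := by
      rw [hN0] at hNval
      push_cast at hNval
      rcases mul_eq_zero.mp hNval with hf | hf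
      · rcases mul_eq_zero.mp hf with hf' | hf'
        · exact lemB lam hc1 da db dc hf'
        · exact lemB lam2 hc2 da db dc hf'
      · exact lemB lam3 hc3 da db dc hf
    obtain ⟨hea, heb, hec⟩ := hzero
    have hpa : pa = qa := by omega
    have hpb' : pb = qb := by omega
    have hpc : pc = qc := by omega
    apply PiLp.ext; intro i
    fin_cases i
    · show p 0 = q 0
      rw [hp0, hq0, hpa, hpb', hpc]
    · show p 1 = q 1
      rw [hp1, hq1, hpa, hpb', hpc]
  · -- relative denseness
    refine ⟨10, by norm_num, fun x => ?_⟩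
    set K : ℝ := lam - lam^2 with hK
    have hd : (lam2 - lam) * (lam3 - lam) * (lam3 - lam2) ≠ 0 := by
      have : (0:ℝ) < (lam2 - lam) * (lam3 - lam) * (lam3 - lam2) := by
        apply mul_pos (mul_pos_of_neg_of_neg (by linarith) (by linarith)) (by linarith)
      exact ne_of_gt this
    set d : ℝ := (lam2 - lam) * (lam3 - lam) * (lam3 - lam2) with hdd
    set β : ℝ := ((x 0 - K)*(lam3^2 - lam^2) - (x 1 - K)*(lam2^2 - lam^2))/d with hβ
    set γ : ℝ := ((lam2 - lam)*(x 1 - K) - (lam3 - lam)*(x 0 - K))/d with hγ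
    have hex2 : β*(lam2 - lam) + γ*(lam2^2 - lam^2) = x 0 - K := by
      have hd' : (lam2 - lam) * (lam3 - lam) * (lam3 - lam2) ≠ 0 := by rw [← hdd]; exact hd
      rw [hβ, hγ, hdd]
      rw [div_mul_eq_mul_div, div_mul_eq_mul_div, ← add_div, div_eq_iff hd']
      ring
    have hex3 : β*(lam3 - lam) + γ*(lam3^2 - lam^2) = x 1 - K := by
      have hd' : (lam2 - lam) * (lam3 - lam) * (lam3 - lam2) ≠ 0 := by rw [← hdd]; exact hd
      rw [hβ, hγ, hdd]
      rw [div_mul_eq_mul_div, div_mul_eq_mul_div, ← add_div, div_eq_iff hd']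
      ring
    set b : ℤ := round β with hb
    set c : ℤ := round γ with hc
    set a : ℤ := ⌈K - (b:ℝ)*lam - (c:ℝ)*lam^2⌉ with ha
    have hA1 : K - (b:ℝ)*lam - (c:ℝ)*lam^2 ≤ (a:ℝ) := Int.le_ceil _
    have hA2 : (a:ℝ) < K - (b:ℝ)*lam - (c:ℝ)*lam^2 + 1 := Int.ceil_lt_add_one _
    have hbβ : |β - (b:ℝ)| ≤ 1/2 := by
      rw [hb]; exact abs_sub_round β
    have hcγ : |γ - (c:ℝ)| ≤ 1/2 := by
      rw [hc]; exact abs_sub_round γ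
    have hbβ' := abs_le.mp hbβ
    have hcγ' := abs_le.mp hcγ
    -- the candidate point
    set P : EuclideanSpace ℝ (Fin 2) :=
      !₂[(a:ℝ) + (b:ℝ)*lam2 + (c:ℝ)*lam2^2, (a:ℝ) + (b:ℝ)*lam3 + (c:ℝ)*lam3^2] with hP
    have hP0 : P 0 = (a:ℝ) + (b:ℝ)*lam2 + (c:ℝ)*lam2^2 := rfl
    have hP1 : P 1 = (a:ℝ) + (b:ℝ)*lam3 + (c:ℝ)*lam3^2 := rfl
    have key0 : x 0 - P 0
        = (K - (b:ℝ)*lam - (c:ℝ)*lam^2 - (a:ℝ))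
          + (β - (b:ℝ))*(lam2 - lam) + (γ - (c:ℝ))*(lam2^2 - lam^2) := by
      rw [hP0]; linear_combination -hex2
    have key1 : x 1 - P 1
        = (K - (b:ℝ)*lam - (c:ℝ)*lam^2 - (a:ℝ))
          + (β - (b:ℝ))*(lam3 - lam) + (γ - (c:ℝ))*(lam3^2 - lam^2) := by
      rw [hP1]; linear_combination -hex3
    clear_value d β γ b c a P
    refine ⟨P, ?_, ?_⟩
    · rw [hU]
      refine ⟨a, b, c, hP0, hP1, ?_⟩
      rw [hW]
      right
      constructor
      · rw [hK] at hA1; linarith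
      · rw [hK] at hA2; linarith
    · rw [Metric.mem_closedBall, dist_comm, EuclideanSpace.dist_eq]
      have bA : |K - (b:ℝ)*lam - (c:ℝ)*lam^2 - (a:ℝ)| ≤ 1 :=
        abs_le.mpr ⟨by linarith, by linarith⟩
      have m2 : |lam2 - lam| ≤ 3.51 := abs_le.mpr ⟨by linarith, by linarith⟩
      have m3 : |lam3 - lam| ≤ 2.5 := abs_le.mpr ⟨by linarith, by linarith⟩
      have m2sq : |lam2^2 - lam^2| ≤ 8.41 :=
        abs_le.mpr ⟨by linarith [sq_nonneg lam2], by linarith [sq_nonneg lam2]⟩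
      have m3sq : |lam3^2 - lam^2| ≤ 8.41 :=
        abs_le.mpr ⟨by linarith [sq_nonneg lam3], by linarith [sq_nonneg lam3]⟩
      have bB : |(β - (b:ℝ))*(lam2 - lam)| ≤ (1/2) * 3.51 := by
        rw [abs_mul]; exact mul_le_mul hbβ m2 (abs_nonneg _) (by norm_num)
      have bC : |(γ - (c:ℝ))*(lam2^2 - lam^2)| ≤ (1/2) * 8.41 := by
        rw [abs_mul]; exact mul_le_mul hcγ m2sq (abs_nonneg _) (by norm_num)
      have bB' : |(β - (b:ℝ))*(lam3 - lam)| ≤ (1/2) * 2.5 := by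
        rw [abs_mul]; exact mul_le_mul hbβ m3 (abs_nonneg _) (by norm_num)
      have bC' : |(γ - (c:ℝ))*(lam3^2 - lam^2)| ≤ (1/2) * 8.41 := by
        rw [abs_mul]; exact mul_le_mul hcγ m3sq (abs_nonneg _) (by norm_num)
      have hcoord0 : |x 0 - P 0| ≤ 7 := by
        rw [key0]
        calc |K - (b:ℝ)*lam - (c:ℝ)*lam^2 - (a:ℝ)
              + (β - (b:ℝ))*(lam2 - lam) + (γ - (c:ℝ))*(lam2^2 - lam^2)|
            ≤ |K - (b:ℝ)*lam - (c:ℝ)*lam^2 - (a:ℝ) + (β - (b:ℝ))*(lam2 - lam)|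
              + |(γ - (c:ℝ))*(lam2^2 - lam^2)| := abs_add_le _ _
        _ ≤ |K - (b:ℝ)*lam - (c:ℝ)*lam^2 - (a:ℝ)| + |(β - (b:ℝ))*(lam2 - lam)|
              + |(γ - (c:ℝ))*(lam2^2 - lam^2)| := by
            have := abs_add_le (K - (b:ℝ)*lam - (c:ℝ)*lam^2 - (a:ℝ)) ((β - (b:ℝ))*(lam2 - lam))
            linarith
        _ ≤ 7 := by linarith
      have hcoord1 : |x 1 - P 1| ≤ 7 := by
        rw [key1]
        calc |K - (b:ℝ)*lam - (c:ℝ)*lam^2 - (a:ℝ)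
              + (β - (b:ℝ))*(lam3 - lam) + (γ - (c:ℝ))*(lam3^2 - lam^2)|
            ≤ |K - (b:ℝ)*lam - (c:ℝ)*lam^2 - (a:ℝ) + (β - (b:ℝ))*(lam3 - lam)|
              + |(γ - (c:ℝ))*(lam3^2 - lam^2)| := abs_add_le _ _
        _ ≤ |K - (b:ℝ)*lam - (c:ℝ)*lam^2 - (a:ℝ)| + |(β - (b:ℝ))*(lam3 - lam)|
              + |(γ - (c:ℝ))*(lam3^2 - lam^2)| := by
            have := abs_add_le (K - (b:ℝ)*lam - (c:ℝ)*lam^2 - (a:ℝ)) ((β - (b:ℝ))*(lam3 - lam))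
            linarith
        _ ≤ 7 := by linarith
      have e0 : dist (x 0) (P 0) = |x 0 - P 0| := Real.dist_eq _ _
      have e1 : dist (x 1) (P 1) = |x 1 - P 1| := Real.dist_eq _ _
      have hsum : ∑ i, dist (x i) (P i)^2 ≤ 100 := by
        rw [Fin.sum_univ_two, e0, e1]
        linarith [sq7 _ (abs_nonneg (x 0 - P 0)) hcoord0, sq7 _ (abs_nonneg (x 1 - P 1)) hcoord1]
      calc Real.sqrt (∑ i, dist (x i) (P i)^2) ≤ Real.sqrt 100 := Real.sqrt_le_sqrt hsum
      _ = 10 := by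
          rw [show (100:ℝ) = 10^2 by norm_num]
          exact Real.sqrt_sq (by norm_num)
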